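/- (Goodstein) Let L be a bounded distributive lattice. A function f : L^n → L is a polynomial function if and only if for all x₁,…,xₙ ∈ L, f(x₁,…,xₙ) = ⋁_{I ⊆ [n]} ( f(e_I) ∧ ⋀_{i ∈ I} xᵢ ), where e_I is the characteristic vector of I (component i equals 1 if i ∈ I and 0 otherwise). -/

import Mathlib

inductive IsLatPoly {L : Type*} [DistribLattice L] [BoundedOrder L] {n : ℕ} :
    ((Fin n → L) → L) → Prop
  | proj (i : Fin n) : IsLatPoly (fun x => x i)
  | const (c : L) : IsLatPoly (fun _ => c)
  | inf {f g : (Fin n → L) → L} : IsLatPoly f → IsLatPoly g → IsLatPoly (fun x => f x ⊓ g x)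
  | sup {f g : (Fin n → L) → L} : IsLatPoly f → IsLatPoly g → IsLatPoly (fun x => f x ⊔ g x)

def charVec {L : Type*} [DistribLattice L] [BoundedOrder L] {n : ℕ}
    (I : Finset (Fin n)) : Fin n → L :=
  fun i => if i ∈ I then ⊤ else ⊥

lemma IsLatPoly.monotone {L : Type*} [DistribLattice L] [BoundedOrder L] {n : ℕ}
    {f : (Fin n → L) → L} (h : IsLatPoly f) : Monotone f := by
  induction h with
  | proj i => exact fun a b hab => hab i
  | const c => exact monotone_const
  | inf hf hg ihf ihg => exact ihf.inf ihg
  | sup hf hg ihf ihg => exact ihf.sup ihg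

lemma isLatPoly_finsetInf {L : Type*} [DistribLattice L] [BoundedOrder L] {n : ℕ}
    (I : Finset (Fin n)) : IsLatPoly (fun x : Fin n → L => I.inf x) := by
  induction I using Finset.induction with
  | empty => simpa using IsLatPoly.const (⊤ : L)
  | insert _ _ hni ih =>
      simp only [Finset.inf_insert]
      exact IsLatPoly.inf (IsLatPoly.proj _) ih

lemma isLatPoly_finsetSup {L : Type*} [DistribLattice L] [BoundedOrder L] {n : ℕ}
    (s : Finset (Finset (Fin n))) (g : Finset (Fin n) → (Fin n → L) → L)
    (hg : ∀ I ∈ s, IsLatPoly (g I)) :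
    IsLatPoly (fun x => s.sup (fun I => g I x)) := by
  induction s using Finset.induction with
  | empty => simpa using IsLatPoly.const (⊥ : L)
  | @insert a s hna ih =>
      simp only [Finset.sup_insert]
      exact IsLatPoly.sup (hg a (Finset.mem_insert_self a s))
        (ih fun I hI => hg I (Finset.mem_insert_of_mem hI))

lemma charVec_mono {L : Type*} [DistribLattice L] [BoundedOrder L] {n : ℕ}
    {I J : Finset (Fin n)} (h : I ⊆ J) : (charVec I : Fin n → L) ≤ charVec J := by
  intro i
  unfold charVec
  by_cases hi : i ∈ I
  · simp [hi, h hi]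
  · simp [hi]

theorem goodstein {L : Type*} [DistribLattice L] [BoundedOrder L] {n : ℕ}
    (f : (Fin n → L) → L) :
    IsLatPoly f ↔
      ∀ x : Fin n → L,
        f x = (Finset.univ : Finset (Finset (Fin n))).sup
          (fun I => f (charVec I) ⊓ I.inf x) := by
  constructor
  · intro h
    induction h with
    | proj i =>
        intro x
        apply le_antisymm
        · refine le_trans ?_ (Finset.le_sup
            (f := fun I : Finset (Fin n) => (fun y : Fin n → L => y i) (charVec I) ⊓ I.inf x)
            (Finset.mem_univ ({i} : Finset (Fin n))))
          simp [charVec]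
        · apply Finset.sup_le
          intro I _
          by_cases hi : i ∈ I
          · exact le_trans inf_le_right (Finset.inf_le hi)
          · simp [charVec, hi]
    | const c =>
        intro x
        apply le_antisymm
        · refine le_trans ?_ (Finset.le_sup
            (f := fun I : Finset (Fin n) => (fun _ : Fin n → L => c) (charVec I) ⊓ I.inf x)
            (Finset.mem_univ (∅ : Finset (Fin n))))
          simp
        · exact Finset.sup_le fun I _ => inf_le_left
    | @inf p q hp hq ihp ihq =>
        intro x
        show p x ⊓ q x = Finset.univ.sup fun I => (p (charVec I) ⊓ q (charVec I)) ⊓ I.inf x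
        rw [ihp x, ihq x, Finset.sup_inf_sup]
        apply le_antisymm
        · apply Finset.sup_le
          intro IJ _
          refine le_trans ?_ (Finset.le_sup (Finset.mem_univ (IJ.1 ∪ IJ.2)))
          have h1 : p (charVec IJ.1) ≤ p (charVec (IJ.1 ∪ IJ.2)) :=
            hp.monotone (charVec_mono Finset.subset_union_left)
          have h2 : q (charVec IJ.2) ≤ q (charVec (IJ.1 ∪ IJ.2)) :=
            hq.monotone (charVec_mono Finset.subset_union_right)
          have h3 : (p (charVec IJ.1) ⊓ IJ.1.inf x) ⊓ (q (charVec IJ.2) ⊓ IJ.2.inf x)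
              ≤ (p (charVec (IJ.1 ∪ IJ.2)) ⊓ q (charVec (IJ.1 ∪ IJ.2))) ⊓ ((IJ.1 ∪ IJ.2).inf x) := by
            rw [Finset.inf_union]
            refine le_inf (le_inf ?_ ?_) (le_inf ?_ ?_)
            · exact le_trans inf_le_left (le_trans inf_le_left h1)
            · exact le_trans inf_le_right (le_trans inf_le_left h2)
            · exact le_trans inf_le_left inf_le_right
            · exact le_trans inf_le_right inf_le_right
          exact h3
        · apply Finset.sup_le
          intro K _
          refine le_trans ?_ (Finset.le_sup (Finset.mem_univ ((K, K) : Finset (Fin n) × Finset (Fin n))))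
          simp only
          refine le_inf (le_inf ?_ ?_) (le_inf ?_ ?_)
          · exact le_trans inf_le_left inf_le_left
          · exact inf_le_right
          · exact le_trans inf_le_left inf_le_right
          · exact inf_le_right
    | @sup p q hp hq ihp ihq =>
        intro x
        show p x ⊔ q x = Finset.univ.sup fun I => (p (charVec I) ⊔ q (charVec I)) ⊓ I.inf x
        rw [ihp x, ihq x, ← Finset.sup_sup]
        apply Finset.sup_congr rfl
        intro I _
        simp [Pi.sup_apply, inf_sup_right]
  · intro h
    have hfun : f = fun x => (Finset.univ : Finset (Finset (Fin n))).sup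
        (fun I => f (charVec I) ⊓ I.inf x) := funext h
    rw [hfun]
    exact isLatPoly_finsetSup Finset.univ _
      (fun I _ => IsLatPoly.inf (IsLatPoly.const _) (isLatPoly_finsetInf I))
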